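/- Let G be a graph, X ⊆ V(G), and k ≥ 1 with |δ(X)| ≥ (3/2)k. If there does not exist a partition U_1, …, U_m of V(G) \ X with |δ(U_i)| < k for all i, then G contains an X-spider of order k. -/

import Mathlib

/-- A finite multigraph without loops: a vertex type, an edge type, and an
endpoint map assigning to each edge an unordered pair of distinct vertices. -/
structure Multigraph where
  V : Type
  E : Type
  [finV : Finite V]
  [finE : Finite E]
  ends : E → Sym2 V
  no_loops : ∀ e, ¬ (ends e).IsDiag

attribute [instance] Multigraph.finV Multigraph.finE

namespace Multigraph

variable (G : Multigraph)

/-- The set of edges with exactly one endpoint in `X`. -/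
def edgeBoundary (X : Set G.V) : Set G.E :=
  {e | ∃ u v, G.ends e = s(u, v) ∧ u ∈ X ∧ v ∉ X}

/-- The degree of a vertex: the number of edges incident with it. -/
noncomputable def degree (v : G.V) : ℕ := {e | v ∈ G.ends e}.ncard

/-- Two vertices are adjacent if some edge joins them. -/
def Adj (u v : G.V) : Prop := ∃ e, G.ends e = s(u, v)

/-- Walks in a multigraph. -/
inductive Walk : G.V → G.V → Type
  | nil (v : G.V) : Walk v v
  | cons {u v w : G.V} (e : G.E) (h : G.ends e = s(u, v)) (p : Walk v w) : Walk u w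

variable {G}

/-- The list of edges of a walk. -/
def Walk.edges : ∀ {u v : G.V}, G.Walk u v → List G.E
  | _, _, .nil _ => []
  | _, _, .cons e _ p => e :: p.edges

/-- The list of vertices of a walk, from the first to the last. -/
def Walk.support : ∀ {u v : G.V}, G.Walk u v → List G.V
  | _, v, .nil _ => [v]
  | u, _, .cons _ _ p => u :: p.support

/-- A walk is a path if it repeats no vertex. -/
def Walk.IsPath {u v : G.V} (p : G.Walk u v) : Prop := p.support.Nodup

/-- The internal vertices of a walk (all vertices except the two endpoints). -/
def Walk.internals {u v : G.V} (p : G.Walk u v) : List G.V := p.support.tail.dropLast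

/-- The walk avoids the edge set `F`. -/
def Walk.avoids {u v : G.V} (p : G.Walk u v) (F : Set G.E) : Prop := ∀ e ∈ p.edges, e ∉ F

variable (G)

/-- Any two vertices can be joined by a walk avoiding the edge set `F`. -/
def ConnectedAvoiding (F : Set G.E) : Prop :=
  ∀ u v : G.V, ∃ p : G.Walk u v, p.avoids F

/-- A multigraph is connected if any two vertices are joined by a walk. -/
def Connected : Prop := G.ConnectedAvoiding ∅

/-- A multigraph is `k`-edge-connected if it has at least two vertices and
deleting any fewer than `k` edges leaves it connected. -/
def EdgeConnected (k : ℕ) : Prop :=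
  Nontrivial G.V ∧ ∀ F : Set G.E, F.ncard < k → G.ConnectedAvoiding F

end Multigraph

open Multigraph

/-- The data of a (weak) immersion of `H` in `G`: an injection of the vertices and
pairwise edge-disjoint composite paths, one for each edge of `H`. -/
structure ImmersionData (H G : Multigraph) where
  π : H.V → G.V
  inj : Function.Injective π
  pathEnds : H.E → G.V × G.V
  path : ∀ f : H.E, G.Walk (pathEnds f).1 (pathEnds f).2
  ends_eq : ∀ f : H.E, Sym2.map π (H.ends f) = s((pathEnds f).1, (pathEnds f).2)
  isPath : ∀ f, (path f).IsPath
  edge_disj : ∀ f f', f ≠ f' → ∀ e, e ∈ (path f).edges → e ∉ (path f').edges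

/-- `G` contains `H` as a (weak) immersion. -/
def Immersion (H G : Multigraph) : Prop := Nonempty (ImmersionData H G)

/-- An immersion is strong if no branch vertex is an internal vertex of a composite path. -/
def ImmersionData.Strong {H G : Multigraph} (I : ImmersionData H G) : Prop :=
  ∀ f : H.E, ∀ v : H.V, I.π v ∉ (I.path f).internals

/-- `G` contains `H` as a strong immersion. -/
def StrongImmersion (H G : Multigraph) : Prop := ∃ I : ImmersionData H G, I.Strong

/-- `G` contains `H` as a topological minor: an immersion whose composite paths are
internally vertex-disjoint and avoid the branch vertices internally. -/
def TopologicalMinor (H G : Multigraph) : Prop :=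
  ∃ I : ImmersionData H G,
    (∀ f v, I.π v ∉ (I.path f).internals) ∧
    (∀ f f', f ≠ f' → ∀ w, w ∈ (I.path f).internals → w ∉ (I.path f').internals)

/-- The complete multigraph `K t`: one edge for every unordered pair of distinct vertices. -/
def cliqueGraph (t : ℕ) : Multigraph where
  V := Fin t
  E := {p : Sym2 (Fin t) // ¬ p.IsDiag}
  ends := Subtype.val
  no_loops := fun e => e.2

/-- The multigraph `S_{k,n}`: vertices `x_1, …, x_n` (`some i`) and `y` (`none`), with
exactly `k` parallel edges between each `x_i` and `y`. -/
def starMulti (k n : ℕ) : Multigraph where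
  V := Option (Fin n)
  E := Fin n × Fin k
  ends := fun p => s(some p.1, none)
  no_loops := fun e h => by simp [Sym2.mk_isDiag_iff] at h

/-- The multigraph `P_{k,n}`: a path on `n` vertices with each edge replaced by `k`
parallel edges. -/
def pathMulti (k n : ℕ) : Multigraph where
  V := Fin n
  E := Fin (n - 1) × Fin k
  ends := fun p => s(⟨p.1.1, by have := p.1.2; omega⟩, ⟨p.1.1 + 1, by have := p.1.2; omega⟩)
  no_loops := fun e h => by simp [Sym2.mk_isDiag_iff, Fin.ext_iff] at h

namespace Multigraph

/-- A subgraph of a multigraph, given by a set of vertices and a set of edges with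
both endpoints among those vertices. -/
structure Sub (G : Multigraph) where
  verts : Set G.V
  edgeSet : Set G.E
  closed : ∀ e ∈ edgeSet, ∀ v ∈ G.ends e, v ∈ verts

/-- `(A, B)` is a separation: `A` and `B` are edge-disjoint subgraphs whose union is `G`. -/
def IsSeparation {G : Multigraph} (A B : G.Sub) : Prop :=
  A.verts ∪ B.verts = Set.univ ∧ A.edgeSet ∪ B.edgeSet = Set.univ ∧ A.edgeSet ∩ B.edgeSet = ∅

/-- The order of a separation `(A, B)`. -/
noncomputable def sepOrder {G : Multigraph} (A B : G.Sub) : ℕ := (A.verts ∩ B.verts).ncard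

/-- `𝒯` is a tangle of order `Θ` in `G`. -/
def IsTangle (G : Multigraph) (𝒯 : Set (G.Sub × G.Sub)) (Θ : ℕ) : Prop :=
  (∀ p ∈ 𝒯, IsSeparation p.1 p.2 ∧ sepOrder p.1 p.2 < Θ) ∧
  (∀ A B : G.Sub, IsSeparation A B → sepOrder A B < Θ → (A, B) ∈ 𝒯 ∨ (B, A) ∈ 𝒯) ∧
  (∀ p₁ ∈ 𝒯, ∀ p₂ ∈ 𝒯, ∀ p₃ ∈ 𝒯,
    ¬ (p₁.1.verts ∪ p₂.1.verts ∪ p₃.1.verts = Set.univ ∧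
       p₁.1.edgeSet ∪ p₂.1.edgeSet ∪ p₃.1.edgeSet = Set.univ)) ∧
  (∀ p ∈ 𝒯, p.1.verts ≠ Set.univ)

/-- The line graph of a multigraph: vertices are the edges of `G`, with an edge of the
line graph for each unordered pair of distinct edges of `G` sharing an endpoint. -/
def lineGraph (G : Multigraph) : Multigraph where
  V := G.E
  E := {p : Sym2 G.E // ¬ p.IsDiag ∧ ∃ e f, p = s(e, f) ∧ ∃ v, v ∈ G.ends e ∧ v ∈ G.ends f}
  ends := Subtype.val
  no_loops := fun e => e.2.1

/-- `G'` (with projection `q` and new vertex `x`) is obtained from `G` by consolidating the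
vertex set `X`: delete all edges with both ends in `X` and identify `X` to the vertex `x`. -/
def IsConsolidation (G : Multigraph) (X : Set G.V) (G' : Multigraph)
    (q : G.V → G'.V) (x : G'.V) : Prop :=
  Function.Surjective q ∧ (∀ a ∈ X, q a = x) ∧ (∀ a ∉ X, q a ≠ x) ∧
  (∀ a b, a ∉ X → b ∉ X → q a = q b → a = b) ∧
  ∃ φ : {e : G.E // ∃ w ∈ G.ends e, w ∉ X} ≃ G'.E,
    ∀ e, G'.ends (φ e) = Sym2.map q (G.ends e.1)

/-- An `X`-spider of order `k` with body `v`: `k` pairwise edge-disjoint paths from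
`v ∉ X` to `X`, none of them having an internal vertex in `X`. -/
def HasSpiderWithBody (G : Multigraph) (X : Set G.V) (k : ℕ) (v : G.V) : Prop :=
  v ∉ X ∧ ∃ (tgt : Fin k → G.V) (P : ∀ i, G.Walk v (tgt i)),
    (∀ i, tgt i ∈ X) ∧ (∀ i, (P i).IsPath) ∧
    (∀ i, ∀ w ∈ (P i).internals, w ∉ X) ∧
    (∀ i j, i ≠ j → ∀ e ∈ (P i).edges, e ∉ (P j).edges)

/-- `G` contains an `X`-spider of order `k`. -/
def HasXSpider (G : Multigraph) (X : Set G.V) (k : ℕ) : Prop :=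
  ∃ v, HasSpiderWithBody G X k v

/-- A model of the complete graph `K t` in `G`: `t` pairwise disjoint nonempty connected
branch sets with an edge of `G` between any two of them. -/
def IsCliqueModel (G : Multigraph) (t : ℕ) (X : Fin t → Set G.V) : Prop :=
  (∀ i, (X i).Nonempty) ∧
  (∀ i j, i ≠ j → Disjoint (X i) (X j)) ∧
  (∀ i, ∀ u ∈ X i, ∀ v ∈ X i, ∃ p : G.Walk u v, ∀ w ∈ p.support, w ∈ X i) ∧
  (∀ i j, i ≠ j → ∃ e, ∃ a ∈ X i, ∃ b ∈ X j, G.ends e = s(a, b))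

/-- The canonical separation `(A, B)` of the line graph of `G` associated to a vertex
set `U ⊆ V(G)`. -/
def IsCanonicalSeparation (G : Multigraph) (U : Set G.V) (A B : G.lineGraph.Sub) : Prop :=
  A.verts = {e : G.E | ∃ w ∈ G.ends e, w ∈ U} ∧
  A.edgeSet = {p : G.lineGraph.E | ∀ q ∈ G.lineGraph.ends p, ∃ w ∈ G.ends q, w ∈ U} ∧
  B.verts = {e : G.E | ∃ w ∈ G.ends e, w ∉ U} ∧
  B.edgeSet = {p : G.lineGraph.E | (∀ q ∈ G.lineGraph.ends p, ∃ w ∈ G.ends q, w ∉ U) ∧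
    ¬ (∀ q ∈ G.lineGraph.ends p, q ∈ G.edgeBoundary U)}

/-- A `k`-star with center `u`: a set of `k` edges all incident with `u`. -/
def IsKStarWithCenter (G : Multigraph) (F : Set G.E) (k : ℕ) (u : G.V) : Prop :=
  F.ncard = k ∧ ∀ e ∈ F, u ∈ G.ends e

/-- A set `F` of vertices of the line graph of `G` is free with respect to a tangle `𝒯`
in the line graph if no separation in `𝒯` of order less than `|F|` has `F` on its small side. -/
def FreeInTangle (G : Multigraph) (𝒯 : Set (G.lineGraph.Sub × G.lineGraph.Sub))
    (F : Set G.E) : Prop :=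
  ¬ ∃ p ∈ 𝒯, sepOrder p.1 p.2 < F.ncard ∧ F ⊆ p.1.verts

end Multigraph
/-! ### Auxiliary development -/

section SpiderProof

attribute [local instance] Classical.propDecidable

namespace Multigraph

variable {G : Multigraph}

noncomputable local instance : Fintype G.V := Fintype.ofFinite _
noncomputable local instance : Fintype G.E := Fintype.ofFinite _

lemma ncard_eq_filter_card {α : Type} [Fintype α] (s : Set α) :
    s.ncard = (Finset.univ.filter (· ∈ s)).card := by
  classical
  rw [Set.ncard_eq_toFinset_card' s]
  congr 1
  ext x
  simp

lemma exists_ends (e : G.E) : ∃ u w, G.ends e = s(u, w) :=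
  Sym2.ind (fun x y => ⟨x, y, rfl⟩) (G.ends e)

lemma mem_edgeBoundary_iff {e : G.E} {u w : G.V} (h : G.ends e = s(u, w)) (S : Set G.V) :
    e ∈ G.edgeBoundary S ↔ (u ∈ S ∧ w ∉ S) ∨ (w ∈ S ∧ u ∉ S) := by
  constructor
  · rintro ⟨a, b, hab, ha, hb⟩
    rw [h, Sym2.eq_iff] at hab
    rcases hab with ⟨rfl, rfl⟩ | ⟨rfl, rfl⟩
    · exact Or.inl ⟨ha, hb⟩
    · exact Or.inr ⟨ha, hb⟩
  · rintro (⟨h1, h2⟩ | ⟨h1, h2⟩)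
    · exact ⟨u, w, h, h1, h2⟩
    · exact ⟨w, u, by rw [h, Sym2.eq_swap], h1, h2⟩

lemma posimod (A B : Set G.V) :
    (G.edgeBoundary (A \ B)).ncard + (G.edgeBoundary (B \ A)).ncard ≤
      (G.edgeBoundary A).ncard + (G.edgeBoundary B).ncard := by
  simp only [ncard_eq_filter_card, Finset.card_filter]
  rw [← Finset.sum_add_distrib, ← Finset.sum_add_distrib]
  apply Finset.sum_le_sum
  intro e _
  obtain ⟨u, w, he⟩ := exists_ends e
  simp only [mem_edgeBoundary_iff he, Set.mem_diff]
  by_cases huA : u ∈ A <;> by_cases huB : u ∈ B <;> by_cases hwA : w ∈ A <;>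
    by_cases hwB : w ∈ B <;> simp [huA, huB, hwA, hwB]

namespace Walk

lemma support_eq_cons : ∀ {a c : G.V} (p : G.Walk a c), ∃ t, p.support = a :: t
  | _, _, .nil v => ⟨[], rfl⟩
  | _, _, .cons e h p => ⟨_, rfl⟩

lemma start_mem_support {a c : G.V} (p : G.Walk a c) : a ∈ p.support := by
  obtain ⟨t, ht⟩ := support_eq_cons p
  rw [ht]; exact List.mem_cons_self

lemma support_eq_concat : ∀ {a c : G.V} (p : G.Walk a c), ∃ t, p.support = t ++ [c]
  | _, _, .nil v => ⟨[], rfl⟩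
  | _, _, .cons (u := u) e h p => by
    obtain ⟨t, ht⟩ := support_eq_concat p
    exact ⟨u :: t, by simp [Walk.support, ht]⟩

lemma end_mem_support {a c : G.V} (p : G.Walk a c) : c ∈ p.support := by
  obtain ⟨t, ht⟩ := support_eq_concat p
  rw [ht]; simp

lemma exists_suffix_walk : ∀ {b c : G.V} (p : G.Walk b c) (a : G.V), a ∈ p.support →
    ∃ r : G.Walk a c, (∀ e ∈ r.edges, e ∈ p.edges) ∧ r.support.IsSuffix p.support
  | _, _, .nil b, a, ha => by
    simp only [Walk.support, List.mem_singleton] at ha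
    subst ha
    exact ⟨.nil _, fun e he => he, List.suffix_refl _⟩
  | _, _, .cons (u := u) e h p, a, ha => by
    by_cases hau : a = u
    · subst hau
      exact ⟨.cons e h p, fun e he => he, List.suffix_refl _⟩
    · have ha' : a ∈ p.support := by
        simp only [Walk.support, List.mem_cons] at ha
        tauto
      obtain ⟨r, hre, hrs⟩ := exists_suffix_walk p a ha'
      exact ⟨r, fun e he => List.mem_cons_of_mem _ (hre e he),
        hrs.trans (List.suffix_cons _ _)⟩

lemma exists_isPath : ∀ {a c : G.V} (p : G.Walk a c),
    ∃ q : G.Walk a c, q.IsPath ∧ (∀ e ∈ q.edges, e ∈ p.edges) ∧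
      (∀ w ∈ q.support, w ∈ p.support)
  | _, _, .nil v => ⟨.nil v, by simp [Walk.IsPath, Walk.support], fun e he => he, fun w hw => hw⟩
  | _, _, .cons (u := u) e h p => by
    obtain ⟨q', hq', hq'e, hq's⟩ := exists_isPath p
    by_cases hu : u ∈ q'.support
    · obtain ⟨r, hre, hrs⟩ := exists_suffix_walk q' u hu
      refine ⟨r, hrs.sublist.nodup hq', fun f hf => List.mem_cons_of_mem _ (hq'e f (hre f hf)),
        fun w hw => List.mem_cons_of_mem _ (hq's w (hrs.subset hw))⟩
    · refine ⟨.cons e h q', ?_, ?_, ?_⟩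
      · exact List.nodup_cons.2 ⟨hu, hq'⟩
      · intro f hf
        rcases List.mem_cons.1 hf with rfl | hf'
        · exact List.mem_cons_self
        · exact List.mem_cons_of_mem _ (hq'e f hf')
      · intro w hw
        rcases List.mem_cons.1 hw with rfl | hw'
        · exact List.mem_cons_self
        · exact List.mem_cons_of_mem _ (hq's w hw')

lemma internals_subset_support {a c : G.V} (p : G.Walk a c) :
    ∀ w ∈ p.internals, w ∈ p.support := fun w hw =>
  List.tail_subset _ (List.dropLast_subset _ hw)

lemma internal_ne_end {a c : G.V} {p : G.Walk a c} (hp : p.IsPath) :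
    ∀ w ∈ p.internals, w ≠ c := by
  intro w hw
  obtain ⟨t, ht⟩ := support_eq_concat p
  have hnd : (t ++ [c]).Nodup := by rw [← ht]; exact hp
  have hdisj := List.disjoint_of_nodup_append hnd
  have hwt : w ∈ t := by
    have : w ∈ p.support.tail.dropLast := hw
    rw [ht] at this
    cases t with
    | nil => simp at this
    | cons x t' =>
      have : w ∈ t' := by simpa [List.dropLast_concat] using this
      exact List.mem_cons_of_mem _ this
  intro hwc
  exact hdisj hwt (by simp [hwc])

end Walk
/-- The walk traverses each of its edges in the direction given by `σ`. -/
def Walk.orientedAlong (σ : G.E → G.V × G.V) : ∀ {a c : G.V}, G.Walk a c → Prop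
  | _, _, .nil _ => True
  | _, _, .cons (u := u) (v := b) e _ p => σ e = (u, b) ∧ p.orientedAlong σ

lemma count_ends (σ : G.E → G.V × G.V) :
    ∀ {a c : G.V} (p : G.Walk a c), p.orientedAlong σ → ∀ x : G.V,
      (p.edges.filter fun e => (σ e).1 = x).length + (if c = x then 1 else 0) =
      (p.edges.filter fun e => (σ e).2 = x).length + (if a = x then 1 else 0)
  | _, _, .nil _, _, x => rfl
  | _, _, .cons (u := u) (v := b) e h p, hor, x => by
    obtain ⟨hoe, hop⟩ := hor
    have ih := count_ends σ p hop x
    have h1 : (σ e).1 = u := by rw [hoe]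
    have h2 : (σ e).2 = b := by rw [hoe]
    simp only [Walk.edges, List.filter_cons, h1, h2]
    split_ifs at * <;> simp_all <;> omega

lemma ncard_setOf_mem_list {L : List G.E} (hL : L.Nodup) (P : G.E → Prop) :
    {e | e ∈ L ∧ P e}.ncard = (L.filter fun e => P e).length := by
  have h1 : {e | e ∈ L ∧ P e} = ↑(L.filter fun e => P e).toFinset := by
    ext e
    simp [List.mem_filter, decide_eq_true_iff]
  rw [h1, Set.ncard_coe_finset, List.toFinset_card_of_nodup (hL.filter _)]
/-- Number of `D`-edges with `σ`-tail `w`. -/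
noncomputable def outC (D : Set G.E) (σ : G.E → G.V × G.V) (w : G.V) : ℕ :=
  {e | e ∈ D ∧ (σ e).1 = w}.ncard

/-- Number of `D`-edges with `σ`-head `w`. -/
noncomputable def inC (D : Set G.E) (σ : G.E → G.V × G.V) (w : G.V) : ℕ :=
  {e | e ∈ D ∧ (σ e).2 = w}.ncard

lemma ncard_cond_insert {D : Set G.E} {e : G.E} (he : e ∉ D) (P : G.E → Prop) :
    {f | f ∈ insert e D ∧ P f}.ncard = {f | f ∈ D ∧ P f}.ncard + (if P e then 1 else 0) := by
  split_ifs with h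
  · have : {f | f ∈ insert e D ∧ P f} = insert e {f | f ∈ D ∧ P f} := by
      ext f; simp only [Set.mem_insert_iff, Set.mem_setOf_eq]; constructor
      · rintro ⟨rfl | hf, hP⟩
        · exact Or.inl rfl
        · exact Or.inr ⟨hf, hP⟩
      · rintro (rfl | ⟨hf, hP⟩)
        · exact ⟨Or.inl rfl, h⟩
        · exact ⟨Or.inr hf, hP⟩
    rw [this, Set.ncard_insert_of_notMem (fun hc => he hc.1) (Set.toFinite _)]
  · have : {f | f ∈ insert e D ∧ P f} = {f | f ∈ D ∧ P f} := by
      ext f; simp only [Set.mem_insert_iff, Set.mem_setOf_eq]; constructor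
      · rintro ⟨rfl | hf, hP⟩
        · exact absurd hP h
        · exact ⟨hf, hP⟩
      · rintro ⟨hf, hP⟩; exact ⟨Or.inr hf, hP⟩
    rw [this]
    omega

lemma ncard_cond_remove {D : Set G.E} {e : G.E} (he : e ∈ D) (P : G.E → Prop) :
    {f | f ∈ D ∧ P f}.ncard = {f | f ∈ D \ {e} ∧ P f}.ncard + (if P e then 1 else 0) := by
  have h2 : e ∉ D \ {e} := fun hc => hc.2 rfl
  have h3 : insert e (D \ {e}) = D := by
    ext f; simp only [Set.mem_insert_iff, Set.mem_diff, Set.mem_singleton_iff]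
    constructor
    · rintro (rfl | ⟨hf, _⟩) <;> assumption
    · intro hf; by_cases hfe : f = e
      · exact Or.inl hfe
      · exact Or.inr ⟨hf, hfe⟩
  conv_lhs => rw [← h3]
  exact ncard_cond_insert h2 P

lemma ncard_cond_congr {D : Set G.E} {P Q : G.E → Prop} (h : ∀ f ∈ D, P f ↔ Q f) :
    {f | f ∈ D ∧ P f}.ncard = {f | f ∈ D ∧ Q f}.ncard := by
  congr 1
  ext f
  simp only [Set.mem_setOf_eq]
  exact ⟨fun ⟨hf, hP⟩ => ⟨hf, (h f hf).1 hP⟩, fun ⟨hf, hQ⟩ => ⟨hf, (h f hf).2 hQ⟩⟩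

lemma ne_of_ends_eq {e : G.E} {a b : G.V} (h : G.ends e = s(a, b)) : a ≠ b := by
  intro hab
  exact G.no_loops e (by rw [h, hab]; exact Sym2.mk_isDiag_iff.2 rfl)

/-- From a vertex with positive excess, extract a walk to `X` along oriented edges. -/
lemma exists_walk_to_X (X : Set G.V) (σ : G.E → G.V × G.V) :
    ∀ (n : ℕ) (D : Set G.E), D.ncard ≤ n →
    (∀ e ∈ D, G.ends e = s((σ e).1, (σ e).2)) →
    (∀ e ∈ D, (σ e).1 ∉ X) →
    ∀ a : G.V, a ∉ X →
    inC D σ a < outC D σ a →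
    (∀ w, w ∉ X → w ≠ a → inC D σ w ≤ outC D σ w) →
    ∃ (c : G.V) (p : G.Walk a c), c ∈ X ∧ p.orientedAlong σ ∧ p.edges.Nodup ∧
      (∀ e ∈ p.edges, e ∈ D) ∧ (∀ w ∈ p.support, w ∈ X → w = c) := by
  intro n
  induction n with
  | zero =>
    intro D hD _ _ a _ hlt _
    have hD0 : D = ∅ := (Set.ncard_eq_zero (Set.toFinite _)).1 (Nat.le_zero.1 hD)
    subst hD0
    have hz : outC (∅ : Set G.E) σ a = 0 := by
      rw [outC]
      convert Set.ncard_empty G.E using 2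
      ext f; simp
    omega
  | succ n ih =>
    intro D hD hvalid htails a ha hlt hcons
    have hout : 0 < outC D σ a := Nat.pos_of_ne_zero (by omega)
    obtain ⟨e, he⟩ : ∃ e, e ∈ D ∧ (σ e).1 = a := by
      by_contra hc
      push_neg at hc
      have : {e | e ∈ D ∧ (σ e).1 = a} = ∅ := by
        ext f; simp only [Set.mem_setOf_eq, Set.mem_empty_iff_false, iff_false]
        rintro ⟨hf, hf2⟩; exact hc f hf hf2
      rw [outC, this] at hout
      simp at hout
    obtain ⟨heD, heσ⟩ := he
    obtain ⟨b, hσe⟩ : ∃ b, σ e = (a, b) := ⟨(σ e).2, by rw [← heσ]⟩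
    have heσ2 : (σ e).2 = b := by rw [hσe]
    have hends : G.ends e = s(a, b) := by rw [← heσ, ← heσ2]; exact hvalid e heD
    have hab : a ≠ b := ne_of_ends_eq hends
    by_cases hbX : b ∈ X
    · refine ⟨b, .cons e hends (.nil b), hbX, ?_, ?_, ?_, ?_⟩
      · exact ⟨hσe, trivial⟩
      · simp [Walk.edges]
      · intro f hf
        simp only [Walk.edges, List.mem_singleton] at hf
        subst hf; exact heD
      · intro w hw hwX
        simp only [Walk.support, List.mem_cons, List.mem_singleton] at hw
        rcases hw with rfl | rfl | h
        · exact absurd hwX ha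
        · rfl
        · simp at h
    · -- recurse with D \ {e} from b
      have hDn : (D \ {e}).ncard ≤ n := by
        have h1 : (D \ {e}).ncard < D.ncard :=
          Set.ncard_diff_singleton_lt_of_mem heD (Set.toFinite _)
        omega
      have hvalid' : ∀ f ∈ D \ {e}, G.ends f = s((σ f).1, (σ f).2) :=
        fun f hf => hvalid f hf.1
      have htails' : ∀ f ∈ D \ {e}, (σ f).1 ∉ X := fun f hf => htails f hf.1
      have houtb : outC D σ b = outC (D \ {e}) σ b := by
        rw [outC, outC, ncard_cond_remove heD (fun f => (σ f).1 = b)]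
        rw [if_neg (by rw [heσ]; exact hab)]
        omega
      have hinb : inC D σ b = inC (D \ {e}) σ b + 1 := by
        rw [inC, inC, ncard_cond_remove heD (fun f => (σ f).2 = b)]
        rw [if_pos heσ2]
      have houta : outC D σ a = outC (D \ {e}) σ a + 1 := by
        rw [outC, outC, ncard_cond_remove heD (fun f => (σ f).1 = a), if_pos heσ]
      have hina : inC D σ a = inC (D \ {e}) σ a := by
        rw [inC, inC, ncard_cond_remove heD (fun f => (σ f).2 = a)]
        rw [if_neg (by rw [heσ2]; exact fun h => hab h.symm)]
        omega
      have hblt : inC (D \ {e}) σ b < outC (D \ {e}) σ b := by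
        have := hcons b hbX (fun h => hab h.symm)
        omega
      have hcons' : ∀ w, w ∉ X → w ≠ b → inC (D \ {e}) σ w ≤ outC (D \ {e}) σ w := by
        intro w hwX hwb
        by_cases hwa : w = a
        · subst hwa; omega
        · have := hcons w hwX hwa
          have hout' : outC D σ w = outC (D \ {e}) σ w := by
            rw [outC, outC, ncard_cond_remove heD (fun f => (σ f).1 = w)]
            rw [if_neg (by rw [heσ]; exact fun h => hwa h.symm)]
            omega
          have hin' : inC D σ w = inC (D \ {e}) σ w := by
            rw [inC, inC, ncard_cond_remove heD (fun f => (σ f).2 = w)]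
            rw [if_neg (by rw [heσ2]; exact fun h => hwb h.symm)]
            omega
          omega
      obtain ⟨c, p, hcX, hor, hnd, hpe, hps⟩ :=
        ih (D \ {e}) hDn hvalid' htails' b hbX hblt hcons'
      refine ⟨c, .cons e hends p, hcX, ⟨hσe, hor⟩, ?_, ?_, ?_⟩
      · exact List.nodup_cons.2 ⟨fun hc => (hpe e hc).2 rfl, hnd⟩
      · intro f hf
        rcases List.mem_cons.1 hf with rfl | hf'
        · exact heD
        · exact (hpe f hf').1
      · intro w hw hwX
        rcases List.mem_cons.1 hw with rfl | hw'
        · exact absurd hwX ha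
        · exact hps w hw' hwX
end Multigraph

/-- A flow of value `j` from `v` towards `X`: a set of edges, each with an orientation,
with conservation away from `v` and `X`, no edge entering `v`, and net outflow `j` at `v`. -/
structure OFlow (G : Multigraph) (X : Set G.V) (v : G.V) (j : ℕ) where
  D : Set G.E
  σ : G.E → G.V × G.V
  valid : ∀ e ∈ D, G.ends e = s((σ e).1, (σ e).2)
  tails : ∀ e ∈ D, (σ e).1 ∉ X
  noin : ∀ e ∈ D, (σ e).2 ≠ v
  conserve : ∀ w, w ∉ X → w ≠ v → Multigraph.outC D σ w = Multigraph.inC D σ w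
  value : Multigraph.outC D σ v = j

namespace Multigraph

lemma flow_decompose (X : Set G.V) (v : G.V) (hv : v ∉ X) :
    ∀ (j : ℕ) (F : OFlow G X v j),
    ∃ (tgt : Fin j → G.V) (P : ∀ i, G.Walk v (tgt i)),
      (∀ i, tgt i ∈ X) ∧ (∀ i, (P i).IsPath) ∧
      (∀ i, ∀ w ∈ (P i).internals, w ∉ X) ∧
      (∀ i, ∀ e ∈ (P i).edges, e ∈ F.D) ∧
      (∀ i i', i ≠ i' → ∀ e ∈ (P i).edges, e ∉ (P i').edges) := by
  intro j
  induction j with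
  | zero =>
    intro F
    exact ⟨Fin.elim0, fun i => i.elim0, fun i => i.elim0, fun i => i.elim0,
      fun i => i.elim0, fun i => i.elim0, fun i => i.elim0⟩
  | succ j ih =>
    intro F
    have hin0 : inC F.D F.σ v = 0 := by
      rw [inC]
      convert Set.ncard_empty G.E using 2
      ext f
      simp only [Set.mem_setOf_eq, Set.mem_empty_iff_false, iff_false]
      rintro ⟨hf, hf2⟩
      exact F.noin f hf hf2
    have hlt : inC F.D F.σ v < outC F.D F.σ v := by rw [hin0, F.value]; omega
    have hcons : ∀ w, w ∉ X → w ≠ v → inC F.D F.σ w ≤ outC F.D F.σ w :=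
      fun w hw hwv => le_of_eq (F.conserve w hw hwv).symm
    obtain ⟨c, p, hcX, hor, hnd, hpe, hps⟩ :=
      exists_walk_to_X X F.σ F.D.ncard F.D le_rfl F.valid F.tails v hv hlt hcons
    set D' : Set G.E := F.D \ {e | e ∈ p.edges} with hD'
    have key : ∀ P : G.E → Prop, {f | f ∈ F.D ∧ P f}.ncard =
        {f | f ∈ D' ∧ P f}.ncard + (p.edges.filter fun e => P e).length := by
      intro P
      have h1 : {f | f ∈ F.D ∧ P f} = {f | f ∈ D' ∧ P f} ∪ {f | f ∈ p.edges ∧ P f} := by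
        ext f
        simp only [Set.mem_setOf_eq, Set.mem_union, hD', Set.mem_diff]
        constructor
        · rintro ⟨hf, hP⟩
          by_cases hfp : f ∈ p.edges
          · exact Or.inr ⟨hfp, hP⟩
          · exact Or.inl ⟨⟨hf, hfp⟩, hP⟩
        · rintro (⟨⟨hf, _⟩, hP⟩ | ⟨hf, hP⟩)
          · exact ⟨hf, hP⟩
          · exact ⟨hpe f hf, hP⟩
      have h2 : Disjoint {f | f ∈ D' ∧ P f} {f | f ∈ p.edges ∧ P f} := by
        rw [Set.disjoint_left]
        rintro f ⟨hf, _⟩ ⟨hf2, _⟩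
        exact hf.2 hf2
      rw [h1, Set.ncard_union_eq h2 (Set.toFinite _) (Set.toFinite _),
        ncard_setOf_mem_list hnd P]
    have conserve' : ∀ w, w ∉ X → w ≠ v → outC D' F.σ w = inC D' F.σ w := by
      intro w hw hwv
      have hc := count_ends F.σ p hor w
      rw [if_neg (fun (h : c = w) => hw (h ▸ hcX)), if_neg (fun (h : v = w) => hwv h.symm)] at hc
      have k1 := key (fun f => (F.σ f).1 = w)
      have k2 := key (fun f => (F.σ f).2 = w)
      have := F.conserve w hw hwv
      rw [outC, inC] at this ⊢
      omega
    have value' : outC D' F.σ v = j := by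
      have hc := count_ends F.σ p hor v
      rw [if_neg (fun (h : c = v) => hv (h ▸ hcX)), if_pos rfl] at hc
      have k1 := key (fun f => (F.σ f).1 = v)
      have k2 := key (fun f => (F.σ f).2 = v)
      have hval := F.value
      rw [outC] at hval
      rw [inC] at hin0
      rw [outC]
      omega
    obtain ⟨tgt', P', htgt', hP'path, hP'int, hP'D, hP'disj⟩ :=
      ih ⟨D', F.σ, fun e he => F.valid e he.1, fun e he => F.tails e he.1,
        fun e he => F.noin e he.1, conserve', value'⟩
    have hP'D' : ∀ i e, e ∈ (P' i).edges → e ∈ F.D ∧ e ∉ {f | f ∈ p.edges} :=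
      fun i e he => hP'D i e he
    obtain ⟨q, hq, hqe, hqs⟩ := Walk.exists_isPath p
    have hqint : ∀ w ∈ q.internals, w ∉ X := by
      intro w hw hwX
      have h1 : w ∈ q.support := Walk.internals_subset_support q w hw
      have h2 : w = c := hps w (hqs w h1) hwX
      exact Walk.internal_ne_end hq w hw h2
    refine ⟨Fin.cons c tgt', Fin.cons q P', ?_, ?_, ?_, ?_, ?_⟩
    · intro i
      refine Fin.cases ?_ ?_ i
      · exact hcX
      · exact htgt'
    · intro i
      refine Fin.cases ?_ ?_ i
      · exact hq
      · exact hP'path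
    · intro i
      refine Fin.cases ?_ ?_ i
      · exact hqint
      · exact hP'int
    · intro i
      refine Fin.cases ?_ ?_ i
      · exact fun e he => hpe e (hqe e he)
      · exact fun i' e he => (hP'D' i' e he).1
    · intro i i'
      refine Fin.cases ?_ ?_ i <;> refine Fin.cases ?_ ?_ i'
      · intro h; exact absurd rfl h
      · intro i' _ e he he'
        exact (hP'D' i' e he').2 (hqe e he)
      · intro i'' _ e he he'
        exact (hP'D' i'' e he).2 (hqe e he')
      · intro i1 i2 h e he he'
        exact hP'disj i2 i1 (fun hh => h (hh ▸ rfl)) e he he'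
end Multigraph

/-- A residual walk with respect to the oriented edge set `(D, σ)`: each step uses either
an unused edge (in either direction) or a used edge traversed against its orientation. -/
inductive RWalk (G : Multigraph) (D : Set G.E) (σ : G.E → G.V × G.V) : G.V → G.V → Type where
  | nil (a : G.V) : RWalk G D σ a a
  | fwd {a b c : G.V} (e : G.E) (he : e ∉ D) (hends : G.ends e = s(a, b))
      (p : RWalk G D σ b c) : RWalk G D σ a c
  | bwd {a b c : G.V} (e : G.E) (he : e ∈ D) (hσ : σ e = (b, a))
      (p : RWalk G D σ b c) : RWalk G D σ a c

namespace RWalk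

variable {G : Multigraph} {D : Set G.E} {σ : G.E → G.V × G.V}

def support : ∀ {a c : G.V}, RWalk G D σ a c → List G.V
  | _, _, .nil a => [a]
  | a, _, .fwd _ _ _ p => a :: p.support
  | a, _, .bwd _ _ _ p => a :: p.support

def edges : ∀ {a c : G.V}, RWalk G D σ a c → List G.E
  | _, _, .nil _ => []
  | _, _, .fwd e _ _ p => e :: p.edges
  | _, _, .bwd e _ _ p => e :: p.edges

lemma support_eq_cons : ∀ {a c : G.V} (p : RWalk G D σ a c), ∃ t, p.support = a :: t
  | _, _, .nil a => ⟨[], rfl⟩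
  | _, _, .fwd _ _ _ p => ⟨_, rfl⟩
  | _, _, .bwd _ _ _ p => ⟨_, rfl⟩

lemma start_mem_support {a c : G.V} (p : RWalk G D σ a c) : a ∈ p.support := by
  obtain ⟨t, ht⟩ := support_eq_cons p
  rw [ht]; exact List.mem_cons_self

lemma end_mem_support : ∀ {a c : G.V} (p : RWalk G D σ a c), c ∈ p.support
  | _, _, .nil a => List.mem_singleton.2 rfl
  | _, _, .fwd _ _ _ p => List.mem_cons_of_mem _ (end_mem_support p)
  | _, _, .bwd _ _ _ p => List.mem_cons_of_mem _ (end_mem_support p)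

lemma edges_endpoints (hvalid : ∀ e ∈ D, G.ends e = s((σ e).1, (σ e).2)) :
    ∀ {a c : G.V} (p : RWalk G D σ a c) (f : G.E), f ∈ p.edges →
      ∃ x y, G.ends f = s(x, y) ∧ x ∈ p.support ∧ y ∈ p.support
  | _, _, .nil _, f, hf => by simp [edges] at hf
  | _, _, .fwd (a := a) (b := b) e he hends p, f, hf => by
    rcases List.mem_cons.1 hf with rfl | hf'
    · exact ⟨a, b, hends, List.mem_cons_self, List.mem_cons_of_mem _ p.start_mem_support⟩
    · obtain ⟨x, y, h1, h2, h3⟩ := edges_endpoints hvalid p f hf'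
      exact ⟨x, y, h1, List.mem_cons_of_mem _ h2, List.mem_cons_of_mem _ h3⟩
  | _, _, .bwd (a := a) (b := b) e he hσe p, f, hf => by
    rcases List.mem_cons.1 hf with rfl | hf'
    · refine ⟨b, a, ?_, List.mem_cons_of_mem _ p.start_mem_support, List.mem_cons_self⟩
      have := hvalid f he
      rw [this, hσe]
    · obtain ⟨x, y, h1, h2, h3⟩ := edges_endpoints hvalid p f hf'
      exact ⟨x, y, h1, List.mem_cons_of_mem _ h2, List.mem_cons_of_mem _ h3⟩

lemma exists_suffix : ∀ {b c : G.V} (p : RWalk G D σ b c) (a : G.V), a ∈ p.support →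
    ∃ r : RWalk G D σ a c, (∀ e ∈ r.edges, e ∈ p.edges) ∧ r.support.IsSuffix p.support
  | _, _, .nil b, a, ha => by
    simp only [support, List.mem_singleton] at ha
    subst ha
    exact ⟨.nil _, fun e he => he, List.suffix_refl _⟩
  | _, _, .fwd (a := u) e he hends p, a, ha => by
    by_cases hau : a = u
    · subst hau
      exact ⟨.fwd e he hends p, fun e he => he, List.suffix_refl _⟩
    · have ha' : a ∈ p.support := by
        simp only [support, List.mem_cons] at ha; tauto
      obtain ⟨r, hre, hrs⟩ := exists_suffix p a ha'
      exact ⟨r, fun e he => List.mem_cons_of_mem _ (hre e he),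
        hrs.trans (List.suffix_cons _ _)⟩
  | _, _, .bwd (a := u) e he hσe p, a, ha => by
    by_cases hau : a = u
    · subst hau
      exact ⟨.bwd e he hσe p, fun e he => he, List.suffix_refl _⟩
    · have ha' : a ∈ p.support := by
        simp only [support, List.mem_cons] at ha; tauto
      obtain ⟨r, hre, hrs⟩ := exists_suffix p a ha'
      exact ⟨r, fun e he => List.mem_cons_of_mem _ (hre e he),
        hrs.trans (List.suffix_cons _ _)⟩

lemma exists_simple : ∀ {a c : G.V} (p : RWalk G D σ a c),
    ∃ q : RWalk G D σ a c, q.support.Nodup ∧ (∀ e ∈ q.edges, e ∈ p.edges) ∧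
      (∀ w ∈ q.support, w ∈ p.support)
  | _, _, .nil a => ⟨.nil a, List.nodup_singleton a, fun e he => he, fun w hw => hw⟩
  | _, _, .fwd (a := u) e he hends p => by
    obtain ⟨q', hq', hq'e, hq's⟩ := exists_simple p
    by_cases hu : u ∈ q'.support
    · obtain ⟨r, hre, hrs⟩ := exists_suffix q' u hu
      exact ⟨r, hrs.sublist.nodup hq', fun f hf => List.mem_cons_of_mem _ (hq'e f (hre f hf)),
        fun w hw => List.mem_cons_of_mem _ (hq's w (hrs.subset hw))⟩
    · refine ⟨.fwd e he hends q', List.nodup_cons.2 ⟨hu, hq'⟩, ?_, ?_⟩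
      · intro f hf
        rcases List.mem_cons.1 hf with rfl | hf'
        · exact List.mem_cons_self
        · exact List.mem_cons_of_mem _ (hq'e f hf')
      · intro w hw
        rcases List.mem_cons.1 hw with rfl | hw'
        · exact List.mem_cons_self
        · exact List.mem_cons_of_mem _ (hq's w hw')
  | _, _, .bwd (a := u) e he hσe p => by
    obtain ⟨q', hq', hq'e, hq's⟩ := exists_simple p
    by_cases hu : u ∈ q'.support
    · obtain ⟨r, hre, hrs⟩ := exists_suffix q' u hu
      exact ⟨r, hrs.sublist.nodup hq', fun f hf => List.mem_cons_of_mem _ (hq'e f (hre f hf)),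
        fun w hw => List.mem_cons_of_mem _ (hq's w (hrs.subset hw))⟩
    · refine ⟨.bwd e he hσe q', List.nodup_cons.2 ⟨hu, hq'⟩, ?_, ?_⟩
      · intro f hf
        rcases List.mem_cons.1 hf with rfl | hf'
        · exact List.mem_cons_self
        · exact List.mem_cons_of_mem _ (hq'e f hf')
      · intro w hw
        rcases List.mem_cons.1 hw with rfl | hw'
        · exact List.mem_cons_self
        · exact List.mem_cons_of_mem _ (hq's w hw')

lemma mem_of_ends_eq {e : G.E} {a b x y : G.V} (h : G.ends e = s(x, y))
    (h2 : G.ends e = s(a, b)) : a = x ∨ a = y := by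
  rw [h] at h2
  rw [Sym2.eq_iff] at h2
  rcases h2 with ⟨h3, _⟩ | ⟨_, h3⟩
  · exact Or.inl h3.symm
  · exact Or.inr h3.symm

lemma edges_nodup_of_support_nodup (hvalid : ∀ e ∈ D, G.ends e = s((σ e).1, (σ e).2)) :
    ∀ {a c : G.V} (p : RWalk G D σ a c), p.support.Nodup → p.edges.Nodup
  | _, _, .nil _, _ => List.nodup_nil
  | _, _, .fwd (a := u) e he hends p, hnd => by
    rw [support, List.nodup_cons] at hnd
    refine List.nodup_cons.2 ⟨?_, edges_nodup_of_support_nodup hvalid p hnd.2⟩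
    intro hc
    obtain ⟨x, y, h1, h2, h3⟩ := edges_endpoints hvalid p e hc
    rcases mem_of_ends_eq h1 hends with rfl | rfl
    · exact hnd.1 h2
    · exact hnd.1 h3
  | _, _, .bwd (a := u) (b := b) e he hσe p, hnd => by
    rw [support, List.nodup_cons] at hnd
    refine List.nodup_cons.2 ⟨?_, edges_nodup_of_support_nodup hvalid p hnd.2⟩
    intro hc
    obtain ⟨x, y, h1, h2, h3⟩ := edges_endpoints hvalid p e hc
    have h2' : G.ends e = s(u, b) := by
      rw [hvalid e he, hσe]
      exact Sym2.eq_swap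
    rcases mem_of_ends_eq h1 h2' with rfl | rfl
    · exact hnd.1 h2
    · exact hnd.1 h3

def snocFwd : ∀ {u a : G.V}, RWalk G D σ u a → ∀ {b : G.V} (e : G.E), e ∉ D →
    G.ends e = s(a, b) → RWalk G D σ u b
  | _, _, .nil a, _, e, he, hends => .fwd e he hends (.nil _)
  | _, _, .fwd e' he' hends' p, _, e, he, hends => .fwd e' he' hends' (p.snocFwd e he hends)
  | _, _, .bwd e' he' hσ' p, _, e, he, hends => .bwd e' he' hσ' (p.snocFwd e he hends)

def snocBwd : ∀ {u a : G.V}, RWalk G D σ u a → ∀ {b : G.V} (e : G.E), e ∈ D →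
    σ e = (b, a) → RWalk G D σ u b
  | _, _, .nil a, _, e, he, hσe => .bwd e he hσe (.nil _)
  | _, _, .fwd e' he' hends' p, _, e, he, hσe => .fwd e' he' hends' (p.snocBwd e he hσe)
  | _, _, .bwd e' he' hσ' p, _, e, he, hσe => .bwd e' he' hσ' (p.snocBwd e he hσe)

lemma support_snocFwd : ∀ {u a : G.V} (p : RWalk G D σ u a) {b : G.V} (e : G.E)
    (he : e ∉ D) (hends : G.ends e = s(a, b)),
    (p.snocFwd e he hends).support = p.support ++ [b]
  | _, _, .nil a, b, e, he, hends => rfl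
  | _, _, .fwd e' he' hends' p, b, e, he, hends => by
    simp only [snocFwd, support, support_snocFwd p e he hends, List.cons_append]
  | _, _, .bwd e' he' hσ' p, b, e, he, hends => by
    simp only [snocFwd, support, support_snocFwd p e he hends, List.cons_append]

lemma support_snocBwd : ∀ {u a : G.V} (p : RWalk G D σ u a) {b : G.V} (e : G.E)
    (he : e ∈ D) (hσe : σ e = (b, a)),
    (p.snocBwd e he hσe).support = p.support ++ [b]
  | _, _, .nil a, b, e, he, hσe => rfl
  | _, _, .fwd e' he' hends' p, b, e, he, hσe => by
    simp only [snocBwd, support, support_snocBwd p e he hσe, List.cons_append]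
  | _, _, .bwd e' he' hσ' p, b, e, he, hσe => by
    simp only [snocBwd, support, support_snocBwd p e he hσe, List.cons_append]

end RWalk

/-- Residual reachability from `v`. -/
inductive Reach (G : Multigraph) (X : Set G.V) (D : Set G.E) (σ : G.E → G.V × G.V)
    (v : G.V) : G.V → Prop where
  | base : Reach G X D σ v v
  | stepFwd {a b : G.V} (ha : Reach G X D σ v a) (haX : a ∉ X) (e : G.E) (he : e ∉ D)
      (hends : G.ends e = s(a, b)) : Reach G X D σ v b
  | stepBwd {a b : G.V} (ha : Reach G X D σ v a) (haX : a ∉ X) (e : G.E) (he : e ∈ D)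
      (hσe : σ e = (b, a)) : Reach G X D σ v b

lemma reach_to_rwalk {G : Multigraph} {X : Set G.V} {D : Set G.E} {σ : G.E → G.V × G.V}
    {v : G.V} (hv : v ∉ X) : ∀ {b : G.V}, Reach G X D σ v b → b ∉ X →
    ∃ p : RWalk G D σ v b, ∀ w ∈ p.support, w ∉ X := by
  intro b hr
  induction hr with
  | base =>
    intro _
    exact ⟨.nil v, by simp [RWalk.support, hv]⟩
  | stepFwd ha haX e he hends ih =>
    intro hbX
    obtain ⟨p, hp⟩ := ih haX
    refine ⟨p.snocFwd e he hends, ?_⟩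
    intro w hw
    rw [RWalk.support_snocFwd] at hw
    rcases List.mem_append.1 hw with hw' | hw'
    · exact hp w hw'
    · rw [List.mem_singleton] at hw'
      subst hw'; exact hbX
  | stepBwd ha haX e he hσe ih =>
    intro hbX
    obtain ⟨p, hp⟩ := ih haX
    refine ⟨p.snocBwd e he hσe, ?_⟩
    intro w hw
    rw [RWalk.support_snocBwd] at hw
    rcases List.mem_append.1 hw with hw' | hw'
    · exact hp w hw'
    · rw [List.mem_singleton] at hw'
      subst hw'; exact hbX

namespace Multigraph

variable {G : Multigraph}

lemma ite_comm_eq {α : Type} (x y : α) :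
    (if x = y then (1 : ℕ) else 0) = if y = x then 1 else 0 := by
  by_cases h : x = y
  · rw [if_pos h, if_pos h.symm]
  · rw [if_neg h, if_neg (fun hc => h hc.symm)]

lemma augment_rec (X : Set G.V) (v : G.V) (hv : v ∉ X) (j : ℕ)
    (FD : Set G.E) (Fσ : G.E → G.V × G.V) (x : G.V) (hx : x ∈ X) :
    ∀ {a : G.V} (p : RWalk G FD Fσ a x),
    p.support.Nodup → p.edges.Nodup → (∀ w ∈ p.support, w ∈ X → w = x) →
    v ∉ p.support.tail →
    ∀ (D' : Set G.E) (σ' : G.E → G.V × G.V),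
    (∀ e ∈ p.edges, (e ∈ D' ↔ e ∈ FD) ∧ σ' e = Fσ e) →
    (∀ e ∈ D', G.ends e = s((σ' e).1, (σ' e).2)) →
    (∀ e ∈ D', (σ' e).1 ∉ X) →
    (∀ e ∈ D', (σ' e).2 ≠ v) →
    (∀ w, w ∉ X → outC D' σ' w + (if w = a then 1 else 0)
        = inC D' σ' w + (if w = v then j + 1 else 0)) →
    Nonempty (OFlow G X v (j + 1))
  | _, .nil _, _, _, _, _ => by
    intro D' σ' _ hvalid htails hnoin hinv
    refine ⟨⟨D', σ', hvalid, htails, hnoin, ?_, ?_⟩⟩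
    · intro w hw hwv
      have := hinv w hw
      rw [if_neg (fun h : w = x => hw (h ▸ hx)), if_neg hwv] at this
      omega
    · have := hinv v hv
      have hin0 : inC D' σ' v = 0 := by
        rw [inC]
        convert Set.ncard_empty G.E using 2
        ext f
        simp only [Set.mem_setOf_eq, Set.mem_empty_iff_false, iff_false]
        rintro ⟨hf, hf2⟩
        exact hnoin f hf hf2
      rw [if_neg (fun h : v = x => hv (h ▸ hx)), if_pos rfl, hin0] at this
      omega
  | a, .fwd (b := b) e he hends p', hnd, hend, hXp, hvt => by
    intro D' σ' hfresh hvalid htails hnoin hinv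
    rw [RWalk.support, List.nodup_cons] at hnd
    rw [RWalk.edges, List.nodup_cons] at hend
    have haX : a ∉ X := by
      intro haX'
      have : a = x := hXp a (List.mem_cons_self) haX'
      exact hnd.1 (this ▸ p'.end_mem_support)
    have hab : a ≠ b := ne_of_ends_eq hends
    have hbv : b ≠ v := by
      intro hc
      apply hvt
      rw [RWalk.support]
      simp only [List.tail_cons]
      exact hc ▸ p'.start_mem_support
    have heD' : e ∉ D' := fun hc => he (((hfresh e (List.mem_cons_self)).1).1 hc)
    set σ'' := Function.update σ' e (a, b) with hσ''
    have hσ''e : σ'' e = (a, b) := Function.update_self e (a, b) σ'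
    have hσ''f : ∀ f, f ≠ e → σ'' f = σ' f := fun f hf => Function.update_of_ne hf _ _
    have houtQ : ∀ w, outC (insert e D') σ'' w = outC D' σ' w + (if w = a then 1 else 0) := by
      intro w
      rw [outC, outC, ncard_cond_insert heD' (fun f => (σ'' f).1 = w),
        ncard_cond_congr (fun f hf => by
          rw [hσ''f f (fun hc => heD' (hc ▸ hf))] : ∀ f ∈ D', (σ'' f).1 = w ↔ (σ' f).1 = w),
        hσ''e]
      simp only [ite_comm_eq]
    have hinQ : ∀ w, inC (insert e D') σ'' w = inC D' σ' w + (if w = b then 1 else 0) := by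
      intro w
      rw [inC, inC, ncard_cond_insert heD' (fun f => (σ'' f).2 = w),
        ncard_cond_congr (fun f hf => by
          rw [hσ''f f (fun hc => heD' (hc ▸ hf))] : ∀ f ∈ D', (σ'' f).2 = w ↔ (σ' f).2 = w),
        hσ''e]
      simp only [ite_comm_eq]
    refine augment_rec X v hv j FD Fσ x hx p' hnd.2 hend.2
      (fun w hw hwX => hXp w (List.mem_cons_of_mem _ hw) hwX)
      (fun hc => hvt (by rw [RWalk.support, List.tail_cons]; exact List.tail_subset _ hc))
      (insert e D') σ'' ?_ ?_ ?_ ?_ ?_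
    · intro f hf
      have hfe : f ≠ e := fun hc => hend.1 (hc ▸ hf)
      have h1 := hfresh f (List.mem_cons_of_mem _ hf)
      refine ⟨?_, by rw [hσ''f f hfe]; exact h1.2⟩
      rw [Set.mem_insert_iff]
      constructor
      · rintro (rfl | h2)
        · exact absurd rfl hfe
        · exact h1.1.1 h2
      · intro h2
        exact Or.inr (h1.1.2 h2)
    · intro f hf
      rcases Set.mem_insert_iff.1 hf with rfl | hf'
      · rw [hσ''e]; exact hends
      · rw [hσ''f f (fun hc => heD' (hc ▸ hf'))]
        exact hvalid f hf'
    · intro f hf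
      rcases Set.mem_insert_iff.1 hf with rfl | hf'
      · rw [hσ''e]; exact haX
      · rw [hσ''f f (fun hc => heD' (hc ▸ hf'))]
        exact htails f hf'
    · intro f hf
      rcases Set.mem_insert_iff.1 hf with rfl | hf'
      · rw [hσ''e]; exact hbv
      · rw [hσ''f f (fun hc => heD' (hc ▸ hf'))]
        exact hnoin f hf'
    · intro w hw
      have hI := hinv w hw
      rw [houtQ w, hinQ w]
      split_ifs at hI ⊢ <;> omega
  | a, .bwd (b := b) e he hσe p', hnd, hend, hXp, hvt => by
    intro D' σ' hfresh hvalid htails hnoin hinv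
    rw [RWalk.support, List.nodup_cons] at hnd
    rw [RWalk.edges, List.nodup_cons] at hend
    have haX : a ∉ X := by
      intro haX'
      have : a = x := hXp a (List.mem_cons_self) haX'
      exact hnd.1 (this ▸ p'.end_mem_support)
    have hbv : b ≠ v := by
      intro hc
      apply hvt
      rw [RWalk.support]
      simp only [List.tail_cons]
      exact hc ▸ p'.start_mem_support
    have hfr := hfresh e (List.mem_cons_self)
    have heD' : e ∈ D' := hfr.1.2 he
    have hσ'e : σ' e = (b, a) := by rw [hfr.2, hσe]
    have houtQ : ∀ w, outC D' σ' w = outC (D' \ {e}) σ' w + (if w = b then 1 else 0) := by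
      intro w
      rw [outC, outC, ncard_cond_remove heD' (fun f => (σ' f).1 = w)]
      rw [show (σ' e).1 = b by rw [hσ'e]]
      simp only [ite_comm_eq]
    have hinQ : ∀ w, inC D' σ' w = inC (D' \ {e}) σ' w + (if w = a then 1 else 0) := by
      intro w
      rw [inC, inC, ncard_cond_remove heD' (fun f => (σ' f).2 = w)]
      rw [show (σ' e).2 = a by rw [hσ'e]]
      simp only [ite_comm_eq]
    refine augment_rec X v hv j FD Fσ x hx p' hnd.2 hend.2
      (fun w hw hwX => hXp w (List.mem_cons_of_mem _ hw) hwX)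
      (fun hc => hvt (by rw [RWalk.support, List.tail_cons]; exact List.tail_subset _ hc))
      (D' \ {e}) σ' ?_ ?_ ?_ ?_ ?_
    · intro f hf
      have hfe : f ≠ e := fun hc => hend.1 (hc ▸ hf)
      have h1 := hfresh f (List.mem_cons_of_mem _ hf)
      refine ⟨?_, h1.2⟩
      rw [Set.mem_diff, Set.mem_singleton_iff]
      constructor
      · rintro ⟨h2, _⟩
        exact h1.1.1 h2
      · intro h2
        exact ⟨h1.1.2 h2, hfe⟩
    · exact fun f hf => hvalid f hf.1
    · exact fun f hf => htails f hf.1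
    · exact fun f hf => hnoin f hf.1
    · intro w hw
      have hI := hinv w hw
      rw [houtQ w, hinQ w] at hI
      split_ifs at hI ⊢ <;> omega

lemma inC_zero {D : Set G.E} {σ : G.E → G.V × G.V} {v : G.V}
    (hnoin : ∀ e ∈ D, (σ e).2 ≠ v) : inC D σ v = 0 := by
  rw [inC]
  convert Set.ncard_empty G.E using 2
  ext f
  simp only [Set.mem_setOf_eq, Set.mem_empty_iff_false, iff_false]
  rintro ⟨hf, hf2⟩
  exact hnoin f hf hf2

lemma outC_empty (σ : G.E → G.V × G.V) (w : G.V) : outC (∅ : Set G.E) σ w = 0 := by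
  rw [outC]
  convert Set.ncard_empty G.E using 2
  ext f
  simp

lemma inC_empty (σ : G.E → G.V × G.V) (w : G.V) : inC (∅ : Set G.E) σ w = 0 := by
  rw [inC]
  convert Set.ncard_empty G.E using 2
  ext f
  simp

lemma augment (X : Set G.V) (v : G.V) (hv : v ∉ X) (j : ℕ) (F : OFlow G X v j)
    (x : G.V) (hx : x ∈ X) (hr : Reach G X F.D F.σ v x) :
    Nonempty (OFlow G X v (j + 1)) := by
  obtain ⟨p1, hp1⟩ : ∃ p : RWalk G F.D F.σ v x, ∀ w ∈ p.support, w ∈ X → w = x := by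
    cases hr with
    | base => exact absurd hx hv
    | stepFwd ha haX e he hends =>
      obtain ⟨p0, hp0⟩ := reach_to_rwalk hv ha haX
      refine ⟨p0.snocFwd e he hends, ?_⟩
      intro w hw hwX
      rw [RWalk.support_snocFwd] at hw
      rcases List.mem_append.1 hw with h | h
      · exact absurd hwX (hp0 w h)
      · exact List.mem_singleton.1 h
    | stepBwd ha haX e he hσe =>
      obtain ⟨p0, hp0⟩ := reach_to_rwalk hv ha haX
      refine ⟨p0.snocBwd e he hσe, ?_⟩
      intro w hw hwX
      rw [RWalk.support_snocBwd] at hw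
      rcases List.mem_append.1 hw with h | h
      · exact absurd hwX (hp0 w h)
      · exact List.mem_singleton.1 h
  obtain ⟨q, hqnd, hqe, hqs⟩ := RWalk.exists_simple p1
  have hqend := RWalk.edges_nodup_of_support_nodup F.valid q hqnd
  have hXq : ∀ w ∈ q.support, w ∈ X → w = x := fun w hw hwX => hp1 w (hqs w hw) hwX
  have hvt : v ∉ q.support.tail := by
    obtain ⟨t, ht⟩ := RWalk.support_eq_cons q
    rw [ht] at hqnd ⊢
    rw [List.nodup_cons] at hqnd
    exact hqnd.1
  refine augment_rec X v hv j F.D F.σ x hx q hqnd hqend hXq hvt F.D F.σ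
    (fun e _ => ⟨Iff.rfl, rfl⟩) F.valid F.tails F.noin ?_
  intro w hw
  by_cases hwv : w = v
  · subst hwv
    rw [if_pos rfl, if_pos rfl, F.value, inC_zero F.noin]
    omega
  · rw [if_neg hwv, if_neg hwv, F.conserve w hw hwv]

lemma oflow_flux (X : Set G.V) (v : G.V) (j : ℕ) (F : OFlow G X v j) (R : Set G.V)
    (hRX : R ⊆ Xᶜ) :
    {e | e ∈ F.D ∧ (F.σ e).1 ∈ R}.ncard =
      {e | e ∈ F.D ∧ (F.σ e).2 ∈ R}.ncard + (if v ∈ R then j else 0) := by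
  refine Set.Finite.induction_on (motive := fun R' _ => R' ⊆ Xᶜ →
    {e | e ∈ F.D ∧ (F.σ e).1 ∈ R'}.ncard =
      {e | e ∈ F.D ∧ (F.σ e).2 ∈ R'}.ncard + (if v ∈ R' then j else 0))
    R (Set.toFinite R) ?_ ?_ hRX
  · intro _
    have h1 : {e | e ∈ F.D ∧ (F.σ e).1 ∈ (∅ : Set G.V)} = ∅ := by
      ext e; simp
    have h2 : {e | e ∈ F.D ∧ (F.σ e).2 ∈ (∅ : Set G.V)} = ∅ := by
      ext e; simp
    rw [h1, h2, if_neg (Set.notMem_empty v)]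
    omega
  · intro a s has _ ih hsub
    have haX : a ∉ X := hsub (Set.mem_insert a s)
    have hs' : s ⊆ Xᶜ := fun w hw => hsub (Set.mem_insert_of_mem a hw)
    have hsplit : ∀ (g : G.E → G.V),
        {e | e ∈ F.D ∧ g e ∈ insert a s}.ncard =
          {e | e ∈ F.D ∧ g e = a}.ncard + {e | e ∈ F.D ∧ g e ∈ s}.ncard := by
      intro g
      have h1 : {e | e ∈ F.D ∧ g e ∈ insert a s} =
          {e | e ∈ F.D ∧ g e = a} ∪ {e | e ∈ F.D ∧ g e ∈ s} := by
        ext e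
        simp only [Set.mem_setOf_eq, Set.mem_insert_iff, Set.mem_union]
        tauto
      have h2 : Disjoint {e | e ∈ F.D ∧ g e = a} {e | e ∈ F.D ∧ g e ∈ s} := by
        rw [Set.disjoint_left]
        rintro e ⟨_, h3⟩ ⟨_, h4⟩
        exact has (h3 ▸ h4)
      rw [h1, Set.ncard_union_eq h2 (Set.toFinite _) (Set.toFinite _)]
    rw [hsplit (fun e => (F.σ e).1), hsplit (fun e => (F.σ e).2), ih hs']
    have hout : {e | e ∈ F.D ∧ (F.σ e).1 = a}.ncard = outC F.D F.σ a := rfl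
    have hin : {e | e ∈ F.D ∧ (F.σ e).2 = a}.ncard = inC F.D F.σ a := rfl
    by_cases hav : a = v
    · subst hav
      rw [hout, hin, F.value, inC_zero F.noin, if_pos (Set.mem_insert a s), if_neg has]
      omega
    · rw [hout, hin, F.conserve a haX hav]
      have : (v ∈ insert a s) ↔ (v ∈ s) := by
        simp only [Set.mem_insert_iff]
        constructor
        · rintro (rfl | h)
          · exact absurd rfl hav
          · exact h
        · exact Or.inr
      by_cases hvs : v ∈ s
      · rw [if_pos (this.2 hvs), if_pos hvs]; omega
      · rw [if_neg (fun hc => hvs (this.1 hc)), if_neg hvs]; omega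

lemma exists_oflow (X : Set G.V) (v : G.V) (hv : v ∉ X) (k : ℕ)
    (hcut : ∀ S : Set G.V, v ∈ S → S ⊆ Xᶜ → k ≤ (G.edgeBoundary S).ncard) :
    ∀ j, j ≤ k → Nonempty (OFlow G X v j) := by
  intro j
  induction j with
  | zero =>
    intro _
    exact ⟨⟨∅, fun _ => (v, v), fun e he => absurd he (Set.notMem_empty e),
      fun e he => absurd he (Set.notMem_empty e), fun e he => absurd he (Set.notMem_empty e),
      fun w _ _ => by rw [outC_empty, inC_empty], outC_empty _ _⟩⟩
  | succ j ih =>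
    intro hjk
    obtain ⟨F⟩ := ih (Nat.le_of_succ_le hjk)
    by_cases hex : ∃ x ∈ X, Reach G X F.D F.σ v x
    · obtain ⟨x, hx, hr⟩ := hex
      exact augment X v hv j F x hx hr
    · exfalso
      push_neg at hex
      set R : Set G.V := {a | Reach G X F.D F.σ v a} with hR
      have hRX : R ⊆ Xᶜ := fun a ha => fun haX => hex a haX ha
      have hvR : v ∈ R := Reach.base
      have hnoinward : ∀ e ∈ F.D, (F.σ e).2 ∈ R → (F.σ e).1 ∈ R := by
        intro e he h2
        exact Reach.stepBwd h2 (hRX h2) e he rfl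
      have hboundary : G.edgeBoundary R =
          {e | e ∈ F.D ∧ ((F.σ e).1 ∈ R ∧ (F.σ e).2 ∉ R)} := by
        ext e
        constructor
        · rintro ⟨u, w, hew, huR, hwR⟩
          by_cases heD : e ∈ F.D
          · have hval := F.valid e heD
            rw [hew, Sym2.eq_iff] at hval
            rcases hval with ⟨h1, h2⟩ | ⟨h1, h2⟩
            · exact ⟨heD, h1 ▸ huR, h2 ▸ hwR⟩
            · exact absurd (hnoinward e heD (h1 ▸ huR)) (h2 ▸ hwR)
          · exact absurd (Reach.stepFwd huR (hRX huR) e heD hew) hwR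
        · rintro ⟨heD, h1, h2⟩
          exact ⟨_, _, F.valid e heD, h1, h2⟩
      have hOI := oflow_flux X v j F R hRX
      rw [if_pos hvR] at hOI
      have hIN : {e | e ∈ F.D ∧ (F.σ e).2 ∈ R}.ncard =
          {e | e ∈ F.D ∧ ((F.σ e).1 ∈ R ∧ (F.σ e).2 ∈ R)}.ncard :=
        ncard_cond_congr (fun f hf =>
          ⟨fun h => ⟨hnoinward f hf h, h⟩, fun h => h.2⟩)
      have hsplit : {e | e ∈ F.D ∧ (F.σ e).1 ∈ R}.ncard =
          {e | e ∈ F.D ∧ ((F.σ e).1 ∈ R ∧ (F.σ e).2 ∈ R)}.ncard +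
          {e | e ∈ F.D ∧ ((F.σ e).1 ∈ R ∧ (F.σ e).2 ∉ R)}.ncard := by
        have h1 : {e | e ∈ F.D ∧ (F.σ e).1 ∈ R} =
            {e | e ∈ F.D ∧ ((F.σ e).1 ∈ R ∧ (F.σ e).2 ∈ R)} ∪
            {e | e ∈ F.D ∧ ((F.σ e).1 ∈ R ∧ (F.σ e).2 ∉ R)} := by
          ext e
          simp only [Set.mem_setOf_eq, Set.mem_union]
          tauto
        have h2 : Disjoint {e | e ∈ F.D ∧ ((F.σ e).1 ∈ R ∧ (F.σ e).2 ∈ R)}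
            {e | e ∈ F.D ∧ ((F.σ e).1 ∈ R ∧ (F.σ e).2 ∉ R)} := by
          rw [Set.disjoint_left]
          rintro e ⟨_, _, h3⟩ ⟨_, _, h4⟩
          exact h4 h3
        rw [h1, Set.ncard_union_eq h2 (Set.toFinite _) (Set.toFinite _)]
      have hbd : (G.edgeBoundary R).ncard = j := by
        rw [hboundary]
        omega
      have := hcut R hvR hRX
      omega

lemma spider_of_cut (X : Set G.V) (k : ℕ) (v : G.V) (hv : v ∉ X)
    (hcut : ∀ S : Set G.V, v ∈ S → S ⊆ Xᶜ → k ≤ (G.edgeBoundary S).ncard) :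
    G.HasSpiderWithBody X k v := by
  obtain ⟨F⟩ := exists_oflow X v hv k hcut k le_rfl
  obtain ⟨tgt, P, h1, h2, h3, _, h5⟩ := flow_decompose X v hv k F
  exact ⟨hv, tgt, P, h1, h2, h3, h5⟩

/-- A good family: pairwise disjoint sets avoiding `X`, each with small edge boundary. -/
def GoodFam (X : Set G.V) (k : ℕ) (𝒟 : Finset (Set G.V)) : Prop :=
  (∀ D ∈ 𝒟, D ⊆ Xᶜ ∧ (G.edgeBoundary D).ncard < k) ∧
  (∀ D ∈ 𝒟, ∀ D' ∈ 𝒟, D ≠ D' → Disjoint D D')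

lemma inner_base (X : Set G.V) (k : ℕ) (𝒟 : Finset (Set G.V)) (S : Set G.V)
    (hmeet : ∀ D ∈ 𝒟, D ∩ S = ∅) (hgood : GoodFam X k 𝒟) (hSX : S ⊆ Xᶜ)
    (hSk : (G.edgeBoundary S).ncard < k) :
    ∃ 𝒟' : Finset (Set G.V), GoodFam X k 𝒟' ∧ (⋃₀ ↑𝒟) ∪ S ⊆ ⋃₀ (↑𝒟' : Set (Set G.V)) := by
  refine ⟨insert S 𝒟, ⟨?_, ?_⟩, ?_⟩
  · intro D hD
    rcases Finset.mem_insert.1 hD with rfl | hD'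
    · exact ⟨hSX, hSk⟩
    · exact hgood.1 D hD'
  · intro D hD D' hD' hne
    rcases Finset.mem_insert.1 hD with rfl | h1 <;> rcases Finset.mem_insert.1 hD' with rfl | h2
    · exact absurd rfl hne
    · rw [Set.disjoint_left]
      intro a haS haD'
      have hmem : a ∈ D' ∩ D := ⟨haD', haS⟩
      rw [hmeet D' h2] at hmem
      exact hmem
    · rw [Set.disjoint_left]
      intro a haD haS
      have hmem : a ∈ D ∩ D' := ⟨haD, haS⟩
      rw [hmeet D h1] at hmem
      exact hmem
    · exact hgood.2 D h1 D' h2 hne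
  · rw [Finset.coe_insert, Set.sUnion_insert]
    refine Set.union_subset ?_ Set.subset_union_left
    exact Set.subset_union_of_subset_right (fun x hx => hx) S

lemma inner_uncross (X : Set G.V) (k : ℕ) :
    ∀ (n : ℕ) (𝒟 : Finset (Set G.V)) (S : Set G.V),
    (∑ D ∈ 𝒟, (D ∩ S).ncard) ≤ n → GoodFam X k 𝒟 → S ⊆ Xᶜ →
    (G.edgeBoundary S).ncard < k →
    ∃ 𝒟' : Finset (Set G.V), GoodFam X k 𝒟' ∧ (⋃₀ ↑𝒟) ∪ S ⊆ ⋃₀ (↑𝒟' : Set (Set G.V)) := by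
  intro n
  induction n with
  | zero =>
    intro 𝒟 S hm hgood hSX hSk
    refine inner_base X k 𝒟 S ?_ hgood hSX hSk
    intro D hD
    have h0 : (D ∩ S).ncard = 0 := by
      have h1 : (D ∩ S).ncard ≤ ∑ D ∈ 𝒟, (D ∩ S).ncard :=
        Finset.single_le_sum (f := fun D => (D ∩ S).ncard) (fun i _ => Nat.zero_le _) hD
      omega
    exact (Set.ncard_eq_zero (Set.toFinite _)).1 h0
  | succ n ih =>
    intro 𝒟 S hm hgood hSX hSk
    by_cases hmeet : ∀ D ∈ 𝒟, D ∩ S = ∅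
    · exact inner_base X k 𝒟 S hmeet hgood hSX hSk
    · push_neg at hmeet
      obtain ⟨D₀, hD₀, hD₀S⟩ := hmeet
      have hpos : 1 ≤ (D₀ ∩ S).ncard := (Set.ncard_pos (Set.toFinite _)).2 hD₀S
      have hsum : ∑ D ∈ 𝒟.erase D₀, (D ∩ S).ncard + (D₀ ∩ S).ncard = ∑ D ∈ 𝒟, (D ∩ S).ncard :=
        Finset.sum_erase_add 𝒟 _ hD₀
      have hgood' : GoodFam X k (𝒟.erase D₀) :=
        ⟨fun D hD => hgood.1 D (Finset.mem_of_mem_erase hD),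
         fun D hD D' hD' hne => hgood.2 D (Finset.mem_of_mem_erase hD)
           D' (Finset.mem_of_mem_erase hD') hne⟩
      by_cases hsub : D₀ ⊆ S
      · obtain ⟨𝒟', hg', hc'⟩ := ih (𝒟.erase D₀) S (by omega) hgood' hSX hSk
        refine ⟨𝒟', hg', ?_⟩
        refine Set.union_subset ?_ ((Set.subset_union_right).trans hc')
        intro x hx
        obtain ⟨D, hD, hxD⟩ := hx
        by_cases hDD₀ : D = D₀
        · subst hDD₀
          exact hc' (Or.inr (hsub hxD))
        · exact hc' (Or.inl ⟨D, Finset.mem_coe.2 (Finset.mem_erase.2 ⟨hDD₀, hD⟩), hxD⟩)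
      · have hD₀X := (hgood.1 D₀ hD₀).1
        have hD₀k := (hgood.1 D₀ hD₀).2
        have hpm := posimod S D₀
        by_cases hSD : (G.edgeBoundary (S \ D₀)).ncard < k
        · -- shrink S by removing D₀
          have hm' : ∑ D ∈ 𝒟, (D ∩ (S \ D₀)).ncard ≤ n := by
            have h1 : ∑ D ∈ 𝒟.erase D₀, (D ∩ (S \ D₀)).ncard ≤
                ∑ D ∈ 𝒟.erase D₀, (D ∩ S).ncard := by
              refine Finset.sum_le_sum ?_
              intro D _
              exact Set.ncard_le_ncard (Set.inter_subset_inter_right D Set.diff_subset)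
                (Set.toFinite _)
            have h2 : (D₀ ∩ (S \ D₀)).ncard = 0 := by
              rw [Set.ncard_eq_zero (Set.toFinite _)]
              ext x
              simp only [Set.mem_inter_iff, Set.mem_diff, Set.mem_empty_iff_false, iff_false]
              rintro ⟨h3, _, h4⟩
              exact h4 h3
            have h5 : ∑ D ∈ 𝒟.erase D₀, (D ∩ (S \ D₀)).ncard + (D₀ ∩ (S \ D₀)).ncard
                = ∑ D ∈ 𝒟, (D ∩ (S \ D₀)).ncard := Finset.sum_erase_add 𝒟 _ hD₀
            omega
          obtain ⟨𝒟', hg', hc'⟩ := ih 𝒟 (S \ D₀) hm' hgood (fun x hx => hSX hx.1) hSD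
          refine ⟨𝒟', hg', Set.union_subset ((Set.subset_union_left).trans hc') ?_⟩
          intro x hx
          by_cases hxD₀ : x ∈ D₀
          · exact hc' (Or.inl ⟨D₀, hD₀, hxD₀⟩)
          · exact hc' (Or.inr ⟨hx, hxD₀⟩)
        · -- replace D₀ by D₀ \ S
          have hDS : (G.edgeBoundary (D₀ \ S)).ncard < k := by omega
          obtain ⟨x₀, hx₀⟩ : (D₀ \ S).Nonempty := by
            rw [Set.nonempty_iff_ne_empty]
            intro hc
            refine hsub (fun x hx => ?_)
            by_contra hxS
            have hmem : x ∈ D₀ \ S := ⟨hx, hxS⟩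
            rw [hc] at hmem
            exact hmem
          have hnotmem : (D₀ \ S) ∉ 𝒟.erase D₀ := by
            intro hc
            have hdisj := hgood.2 (D₀ \ S) (Finset.mem_of_mem_erase hc) D₀ hD₀
              (Finset.mem_erase.1 hc).1
            exact Set.disjoint_left.1 hdisj hx₀ hx₀.1
          have hm2 : ∑ D ∈ insert (D₀ \ S) (𝒟.erase D₀), (D ∩ S).ncard ≤ n := by
            rw [Finset.sum_insert hnotmem]
            have h2 : ((D₀ \ S) ∩ S).ncard = 0 := by
              rw [Set.ncard_eq_zero (Set.toFinite _)]
              ext x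
              simp only [Set.mem_inter_iff, Set.mem_diff, Set.mem_empty_iff_false, iff_false]
              rintro ⟨⟨_, h4⟩, h3⟩
              exact h4 h3
            omega
          have hgood2 : GoodFam X k (insert (D₀ \ S) (𝒟.erase D₀)) := by
            constructor
            · intro D hD
              rcases Finset.mem_insert.1 hD with rfl | hD'
              · exact ⟨fun x hx => hD₀X hx.1, hDS⟩
              · exact hgood.1 D (Finset.mem_of_mem_erase hD')
            · intro D hD D' hD' hne
              rcases Finset.mem_insert.1 hD with rfl | h1 <;>
                rcases Finset.mem_insert.1 hD' with rfl | h2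
              · exact absurd rfl hne
              · exact Set.disjoint_of_subset_left Set.diff_subset
                  (hgood.2 D₀ hD₀ D' (Finset.mem_of_mem_erase h2)
                    (fun hc => (Finset.mem_erase.1 h2).1 hc.symm))
              · exact (Set.disjoint_of_subset_left Set.diff_subset
                  (hgood.2 D₀ hD₀ D (Finset.mem_of_mem_erase h1)
                    (fun hc => (Finset.mem_erase.1 h1).1 hc.symm))).symm
              · exact hgood'.2 D h1 D' h2 hne
          obtain ⟨𝒟', hg', hc'⟩ := ih (insert (D₀ \ S) (𝒟.erase D₀)) S hm2 hgood2 hSX hSk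
          refine ⟨𝒟', hg', Set.union_subset ?_ ((Set.subset_union_right).trans hc')⟩
          intro x hx
          obtain ⟨D, hD, hxD⟩ := hx
          by_cases hDD₀ : D = D₀
          · by_cases hxS : x ∈ S
            · exact hc' (Or.inr hxS)
            · exact hc' (Or.inl ⟨D₀ \ S, Finset.mem_coe.2 (Finset.mem_insert_self _ _),
                ⟨hDD₀ ▸ hxD, hxS⟩⟩)
          · exact hc' (Or.inl ⟨D, Finset.mem_coe.2
              (Finset.mem_insert_of_mem (Finset.mem_erase.2 ⟨hDD₀, hD⟩)), hxD⟩)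

lemma cover_to_partition (X : Set G.V) (k : ℕ)
    (hall : ∀ v ∈ Set.univ \ X, ∃ S : Set G.V, v ∈ S ∧ S ⊆ Xᶜ ∧
      (G.edgeBoundary S).ncard < k) :
    ∃ 𝒟 : Finset (Set G.V), GoodFam X k 𝒟 ∧ ⋃₀ (↑𝒟 : Set (Set G.V)) = Set.univ \ X := by
  suffices h : ∀ (n : ℕ) (𝒟 : Finset (Set G.V)), GoodFam X k 𝒟 →
      ((Set.univ \ X) \ ⋃₀ ↑𝒟).ncard ≤ n →
      ∃ 𝒟' : Finset (Set G.V), GoodFam X k 𝒟' ∧ ⋃₀ ↑𝒟 ⊆ ⋃₀ (↑𝒟' : Set (Set G.V)) ∧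
        GoodFam X k 𝒟' ∧ ⋃₀ (↑𝒟' : Set (Set G.V)) = Set.univ \ X by
    obtain ⟨𝒟', _, _, hg, hc⟩ := h (((Set.univ \ X) \ ⋃₀ (↑(∅ : Finset (Set G.V)))).ncard)
      ∅ ⟨fun D hD => absurd hD (Finset.notMem_empty D), fun D hD => absurd hD
        (Finset.notMem_empty D)⟩ le_rfl
    exact ⟨𝒟', hg, hc⟩
  intro n
  induction n with
  | zero =>
    intro 𝒟 hgood hn
    have hemp : (Set.univ \ X) \ ⋃₀ ↑𝒟 = ∅ :=
      (Set.ncard_eq_zero (Set.toFinite _)).1 (Nat.le_zero.1 hn)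
    refine ⟨𝒟, hgood, fun x hx => hx, hgood, ?_⟩
    apply Set.Subset.antisymm
    · intro x hx
      obtain ⟨D, hD, hxD⟩ := hx
      have h1 := (hgood.1 D hD).1 hxD
      exact ⟨trivial, h1⟩
    · intro x hx
      by_contra hc
      have : x ∈ (Set.univ \ X) \ ⋃₀ ↑𝒟 := ⟨hx, hc⟩
      rw [hemp] at this
      exact this
  | succ n ih =>
    intro 𝒟 hgood hn
    by_cases hun : ((Set.univ \ X) \ ⋃₀ ↑𝒟) = ∅
    · exact ih 𝒟 hgood (by rw [hun]; simp)
    · obtain ⟨v, hv⟩ := Set.nonempty_iff_ne_empty.2 hun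
      obtain ⟨S, hvS, hSX, hSk⟩ := hall v hv.1
      obtain ⟨𝒟₂, hg₂, hc₂⟩ := inner_uncross X k (∑ D ∈ 𝒟, (D ∩ S).ncard) 𝒟 S le_rfl
        hgood hSX hSk
      have hsub : ((Set.univ \ X) \ ⋃₀ ↑𝒟₂) ⊆ (((Set.univ \ X) \ ⋃₀ ↑𝒟) \ {v}) := by
        intro x hx
        refine ⟨⟨hx.1, fun hc => hx.2 (hc₂ (Or.inl hc))⟩, ?_⟩
        intro hc
        rw [Set.mem_singleton_iff] at hc
        subst hc
        exact hx.2 (hc₂ (Or.inr hvS))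
      have hcard : ((Set.univ \ X) \ ⋃₀ ↑𝒟₂).ncard ≤ n := by
        have h1 : (((Set.univ \ X) \ ⋃₀ ↑𝒟) \ {v}).ncard
            = ((Set.univ \ X) \ ⋃₀ ↑𝒟).ncard - 1 :=
          Set.ncard_diff_singleton_of_mem hv
        have h2 := Set.ncard_le_ncard hsub (Set.toFinite _)
        have h3 : 1 ≤ ((Set.univ \ X) \ ⋃₀ ↑𝒟).ncard :=
          (Set.ncard_pos (Set.toFinite _)).2 ⟨v, hv⟩
        omega
      obtain ⟨𝒟', h1', h2', h3', h4'⟩ := ih 𝒟₂ hg₂ hcard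
      exact ⟨𝒟', h1', fun x hx => h2' (hc₂ (Or.inl hx)), h3', h4'⟩

end Multigraph

end SpiderProof


/-- if `|δ(X)| ≥ (3/2)k` and there is no partition of `V(G) \ X` into parts
with small edge boundary, then `G` contains an `X`-spider of order `k`. -/
theorem spider_of_no_partition (G : Multigraph) (X : Set G.V) (k : ℕ) (hk : 1 ≤ k)
    (hδ : 3 * k ≤ 2 * (G.edgeBoundary X).ncard)
    (hnopart : ¬ ∃ (m : ℕ) (U : Fin m → Set G.V),
      (∀ i j, i ≠ j → Disjoint (U i) (U j)) ∧ (⋃ i, U i) = Set.univ \ X ∧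
      ∀ i, (G.edgeBoundary (U i)).ncard < k) :
    G.HasXSpider X k := by
  by_contra hsp
  have hall : ∀ v ∈ Set.univ \ X, ∃ S : Set G.V, v ∈ S ∧ S ⊆ Xᶜ ∧
      (G.edgeBoundary S).ncard < k := by
    intro v hv
    by_contra hno
    push_neg at hno
    exact hsp ⟨v, Multigraph.spider_of_cut X k v hv.2
      (fun S h1 h2 => hno S h1 h2)⟩
  obtain ⟨𝒟, hgood, hcover⟩ := Multigraph.cover_to_partition X k hall
  refine absurd ⟨𝒟.card, fun i => (𝒟.equivFin.symm i : Set G.V), ?_, ?_, ?_⟩ hnopart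
  · intro i j hij
    have hne : (𝒟.equivFin.symm i : Set G.V) ≠ (𝒟.equivFin.symm j : Set G.V) := by
      intro hc
      exact hij (𝒟.equivFin.symm.injective (Subtype.ext hc))
    exact hgood.2 _ (𝒟.equivFin.symm i).2 _ (𝒟.equivFin.symm j).2 hne
  · rw [← hcover]
    ext x
    simp only [Set.mem_iUnion, Set.mem_sUnion]
    constructor
    · rintro ⟨i, hi⟩
      exact ⟨_, (𝒟.equivFin.symm i).2, hi⟩
    · rintro ⟨D, hD, hxD⟩
      refine ⟨𝒟.equivFin ⟨D, hD⟩, ?_⟩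
      rw [Equiv.symm_apply_apply]
      exact hxD
  · intro i
    exact (hgood.1 _ (𝒟.equivFin.symm i).2).2
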